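/- arXiv:1704.01265 — 4 statements merged into one kernel-verified Lean document; each statement's English description precedes it below -/
import Mathlib

section
/- For matrices U ∈ ℝ^{p×r} and V ∈ ℝ^{q×r}, the nuclear norm of X = U Vᵀ satisfies ‖U Vᵀ‖_* ≤ (‖U‖_F² + ‖V‖_F²)/2. -/
open Matrix

noncomputable def singularValues {m n : Type*} [Fintype m] [Fintype n] [DecidableEq n]
    (X : Matrix m n ℝ) : n → ℝ :=
  fun i => Real.sqrt ((show (Xᵀ * X).IsHermitian by
    simpa using Matrix.isHermitian_conjTranspose_mul_self X).eigenvalues i)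

noncomputable def nuclearNorm {m n : Type*} [Fintype m] [Fintype n] [DecidableEq n]
    (X : Matrix m n ℝ) : ℝ := ∑ i, singularValues X i

noncomputable def frobNorm {m n : Type*} [Fintype m] [Fintype n] (X : Matrix m n ℝ) : ℝ :=
  Real.sqrt ((Xᵀ * X).trace)

noncomputable def matSpectralNorm {m n : Type*} [Fintype m] [Fintype n] [DecidableEq m] [DecidableEq n]
    (X : Matrix m n ℝ) : ℝ :=
  ‖LinearMap.toContinuousLinearMap (Matrix.toEuclideanLin X)‖

noncomputable def smallestNonzeroSV {m n : Type*} [Fintype m] [Fintype n] [DecidableEq n]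
    (X : Matrix m n ℝ) : ℝ :=
  sInf {s | (∃ i, singularValues X i = s) ∧ s ≠ 0}

noncomputable def distO {n r : ℕ} (W₁ W₂ : Matrix (Fin n) (Fin r) ℝ) : ℝ :=
  sInf {d | ∃ R : Matrix (Fin r) (Fin r) ℝ, Rᵀ * R = 1 ∧ d = frobNorm (W₁ - W₂ * R)}

lemma dotSelf_nonneg {n : Type*} [Fintype n] (v : n → ℝ) : 0 ≤ v ⬝ᵥ v :=
  Finset.sum_nonneg fun i _ => mul_self_nonneg _

lemma amgm_dot {n : Type*} [Fintype n] (a b : n → ℝ) :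
    a ⬝ᵥ b ≤ (a ⬝ᵥ a + b ⬝ᵥ b) / 2 := by
  have h := dotSelf_nonneg (a - b)
  have he : (a - b) ⬝ᵥ (a - b) = a ⬝ᵥ a - 2 * (a ⬝ᵥ b) + b ⬝ᵥ b := by
    rw [sub_dotProduct, dotProduct_sub, dotProduct_sub, dotProduct_comm b a]; ring
  rw [he] at h; linarith

lemma psd_trace_nonneg {n : Type*} [Fintype n] [DecidableEq n]
    {A : Matrix n n ℝ} (hA : A.PosSemidef) : 0 ≤ A.trace := by
  refine Finset.sum_nonneg fun i _ => ?_
  exact hA.diag_nonneg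

lemma trace_mul_psd_nonneg {n : Type*} [Fintype n] [DecidableEq n]
    {A B : Matrix n n ℝ} (hA : A.PosSemidef) (hB : B.PosSemidef) :
    0 ≤ (A * B).trace := by
  obtain ⟨S, hSherm, hSS⟩ : ∃ S : Matrix n n ℝ, S.IsHermitian ∧ S * S = A :=
    by
    open scoped MatrixOrder in
    exact ⟨CFC.sqrt A, IsSelfAdjoint.of_nonneg (CFC.sqrt_nonneg A),
      CFC.sqrt_mul_sqrt_self A hA.nonneg⟩
  have h1 : (A * B).trace = (S * B * S).trace := by
    rw [← hSS, Matrix.mul_assoc, trace_mul_comm, Matrix.mul_assoc]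
  rw [h1]
  have hpsd : (S * B * Sᴴ).PosSemidef := hB.mul_mul_conjTranspose_same S
  rw [hSherm.eq] at hpsd
  exact psd_trace_nonneg hpsd

lemma dot_transpose_mulVec {m n : Type*} [Fintype m] [Fintype n]
    (M : Matrix m n ℝ) (x : m → ℝ) :
    (Mᵀ *ᵥ x) ⬝ᵥ (Mᵀ *ᵥ x) = x ⬝ᵥ ((M * Mᵀ) *ᵥ x) := by
  rw [← mulVec_mulVec, dotProduct_mulVec x, ← mulVec_transpose]

lemma trace_conj_rows {n m : Type*} [Fintype n] [Fintype m]
    (w : n → m → ℝ) (M : Matrix m m ℝ) :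
    ((Matrix.of w) * M * (Matrix.of w)ᵀ).trace = ∑ i, w i ⬝ᵥ (M *ᵥ w i) := by
  refine Finset.sum_congr rfl fun i _ => ?_
  simp only [diag_apply, mul_apply, transpose_apply, of_apply, dotProduct, mulVec,
    Finset.mul_sum, Finset.sum_mul]
  rw [Finset.sum_comm]
  exact Finset.sum_congr rfl fun k _ => Finset.sum_congr rfl fun l _ => by ring

lemma sum_conj_orthonormal {q : Type*} [Fintype q] [DecidableEq q]
    (w : q → q → ℝ) (hortho : ∀ i j, w i ⬝ᵥ w j = if i = j then 1 else 0)
    (N : Matrix q q ℝ) : ∑ i, w i ⬝ᵥ (N *ᵥ w i) = N.trace := by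
  have h1 : (Matrix.of w) * (Matrix.of w)ᵀ = 1 := by
    ext i j
    simpa [mul_apply, transpose_apply, of_apply, one_apply, dotProduct] using hortho i j
  have h2 : (Matrix.of w)ᵀ * (Matrix.of w) = 1 := mul_eq_one_comm.mp h1
  rw [← trace_conj_rows, trace_mul_cycle, h2, Matrix.one_mul]

theorem stmt0 {p q r : ℕ} (U : Matrix (Fin p) (Fin r) ℝ) (V : Matrix (Fin q) (Fin r) ℝ) :
    nuclearNorm (U * Vᵀ) ≤ (frobNorm U ^ 2 + frobNorm V ^ 2) / 2 := by
  classical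
  set X : Matrix (Fin p) (Fin q) ℝ := U * Vᵀ with hX
  have hA : (Xᵀ * X).IsHermitian := by simpa using Matrix.isHermitian_conjTranspose_mul_self X
  set lam : Fin q → ℝ := hA.eigenvalues with hlamdef
  set w : Fin q → Fin q → ℝ := fun i => ⇑(hA.eigenvectorBasis i) with hwdef
  -- orthonormality in dotProduct form
  have hortho : ∀ i j, w i ⬝ᵥ w j = if i = j then 1 else 0 := by
    intro i j
    have h := orthonormal_iff_ite.mp hA.eigenvectorBasis.orthonormal i j
    simpa [PiLp.inner_apply, RCLike.inner_apply, starRingEnd_apply, dotProduct, hwdef, mul_comm] using h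
  have heig : ∀ i, (Xᵀ * X) *ᵥ w i = lam i • w i := fun i => hA.mulVec_eigenvectorBasis i
  set u : Fin q → Fin p → ℝ := fun i => X *ᵥ w i with hudef
  have hui : ∀ i j, u i ⬝ᵥ u j = if i = j then lam i else 0 := by
    intro i j
    have h1 : u i ⬝ᵥ u j = w i ⬝ᵥ ((Xᵀ * X) *ᵥ w j) := by
      rw [← mulVec_mulVec, dotProduct_mulVec (w i), ← mulVec_transpose, transpose_transpose]
    rw [h1, heig j, dotProduct_smul, smul_eq_mul, hortho i j]
    by_cases hij : i = j
    · subst hij; simp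
    · simp [hij]
  have hlam_nonneg : ∀ i, 0 ≤ lam i := by
    intro i
    have h : u i ⬝ᵥ u i = lam i := by simpa using hui i i
    rw [← h]
    exact Finset.sum_nonneg fun k _ => mul_self_nonneg _
  have hu_zero : ∀ i, lam i = 0 → u i = 0 := by
    intro i h0
    have h : u i ⬝ᵥ u i = lam i := by simpa using hui i i
    rw [h0] at h
    exact dotProduct_self_eq_zero.mp h
  set uh : Fin q → Fin p → ℝ := fun i => (Real.sqrt (lam i))⁻¹ • u i with huhdef
  have huh_zero : ∀ i, lam i = 0 → uh i = 0 := by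
    intro i h0
    simp [huhdef, hu_zero i h0]
  have huhuh : ∀ i j, uh i ⬝ᵥ uh j = if i = j then (if lam i = 0 then 0 else 1) else 0 := by
    intro i j
    simp only [huhdef, smul_dotProduct, dotProduct_smul, smul_eq_mul, hui i j]
    by_cases hij : i = j
    · subst hij
      simp only [if_pos rfl]
      by_cases h0 : lam i = 0
      · simp [h0]
      · have hlpos : 0 < lam i := lt_of_le_of_ne (hlam_nonneg i) (Ne.symm h0)
        have hs : Real.sqrt (lam i) * Real.sqrt (lam i) = lam i :=
          Real.mul_self_sqrt (hlam_nonneg i)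
        have hsne : Real.sqrt (lam i) ≠ 0 := ne_of_gt (Real.sqrt_pos.mpr hlpos)
        rw [if_neg h0]
        field_simp
        simp [Real.sq_sqrt (hlam_nonneg i)]
    · simp [hij]
  have key : ∀ i, Real.sqrt (lam i) = (Uᵀ *ᵥ uh i) ⬝ᵥ (Vᵀ *ᵥ w i) := by
    intro i
    have h1 : (Uᵀ *ᵥ uh i) ⬝ᵥ (Vᵀ *ᵥ w i) = uh i ⬝ᵥ (X *ᵥ w i) := by
      rw [mulVec_transpose, ← dotProduct_mulVec, mulVec_mulVec, ← hX]
    have h2 : uh i ⬝ᵥ (X *ᵥ w i) = (Real.sqrt (lam i))⁻¹ * lam i := by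
      have hu : u i ⬝ᵥ u i = lam i := by simpa using hui i i
      rw [huhdef]
      simp only [smul_dotProduct, smul_eq_mul]
      rw [show (X *ᵥ w i) = u i from rfl, hu]
    rw [h1, h2]
    by_cases h0 : lam i = 0
    · simp [h0]
    · have hlpos : 0 < lam i := lt_of_le_of_ne (hlam_nonneg i) (Ne.symm h0)
      have hs : Real.sqrt (lam i) * Real.sqrt (lam i) = lam i :=
        Real.mul_self_sqrt (hlam_nonneg i)
      have hsne : Real.sqrt (lam i) ≠ 0 := ne_of_gt (Real.sqrt_pos.mpr hlpos)
      field_simp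
      exact Real.sq_sqrt (hlam_nonneg i)
  -- sum of b dot b
  have hb : ∑ i, (Vᵀ *ᵥ w i) ⬝ᵥ (Vᵀ *ᵥ w i) = (Vᵀ * V).trace := by
    have h1 : ∀ i : Fin q, (Vᵀ *ᵥ w i) ⬝ᵥ (Vᵀ *ᵥ w i) = w i ⬝ᵥ ((V * Vᵀ) *ᵥ w i) :=
      fun i => dot_transpose_mulVec V (w i)
    rw [Finset.sum_congr rfl fun i _ => h1 i, sum_conj_orthonormal w hortho, trace_mul_comm]
  -- sum of a dot a
  have ha : ∑ i, (Uᵀ *ᵥ uh i) ⬝ᵥ (Uᵀ *ᵥ uh i) ≤ (Uᵀ * U).trace := by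
    have h1 : ∀ i : Fin q, (Uᵀ *ᵥ uh i) ⬝ᵥ (Uᵀ *ᵥ uh i) = uh i ⬝ᵥ ((U * Uᵀ) *ᵥ uh i) :=
      fun i => dot_transpose_mulVec U (uh i)
    rw [Finset.sum_congr rfl fun i _ => h1 i, ← trace_conj_rows]
    set Wh : Matrix (Fin q) (Fin p) ℝ := Matrix.of uh with hWhdef
    set P : Matrix (Fin p) (Fin p) ℝ := Whᵀ * Wh with hPdef
    rw [trace_mul_cycle]
    set d : Fin q → ℝ := fun i => if lam i = 0 then 0 else 1 with hddef
    have hWW : Wh * Whᵀ = Matrix.diagonal d := by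
      ext i j
      have : (Wh * Whᵀ) i j = uh i ⬝ᵥ uh j := by
        simp [hWhdef, mul_apply, transpose_apply, dotProduct]
      rw [this, huhuh i j, Matrix.diagonal_apply]
    have hDW : Matrix.diagonal d * Wh = Wh := by
      ext i k
      rw [Matrix.diagonal_mul]
      by_cases h0 : lam i = 0
      · have : Wh i k = 0 := by
          show uh i k = 0
          rw [huh_zero i h0]; rfl
        simp [hddef, h0, this]
      · simp [hddef, h0]
    have hP2 : P * P = P := by
      rw [hPdef, Matrix.mul_assoc, ← Matrix.mul_assoc Wh, hWW, hDW]
    have hPt : Pᵀ = P := by rw [hPdef, transpose_mul, transpose_transpose]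
    have h1P : (1 - P).PosSemidef := by
      have hfac : (1 - P)ᵀ * (1 - P) = 1 - P := by
        rw [transpose_sub, transpose_one, hPt, sub_mul, one_mul, mul_sub, mul_one, hP2]
        abel
      have h := Matrix.posSemidef_conjTranspose_mul_self (1 - P)
      rwa [conjTranspose_eq_transpose_of_trivial, hfac] at h
    have hMU : (U * Uᵀ).PosSemidef := by
      have h := Matrix.posSemidef_self_mul_conjTranspose U
      rwa [conjTranspose_eq_transpose_of_trivial] at h
    have hkey : 0 ≤ ((1 - P) * (U * Uᵀ)).trace := trace_mul_psd_nonneg h1P hMU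
    have hexp : ((1 - P) * (U * Uᵀ)).trace = (U * Uᵀ).trace - (Whᵀ * Wh * (U * Uᵀ)).trace := by
      rw [sub_mul, one_mul, trace_sub, hPdef]
    rw [hexp] at hkey
    have htr : (U * Uᵀ).trace = (Uᵀ * U).trace := trace_mul_comm U Uᵀ
    linarith
  -- frobenius norms squared
  have htrU : 0 ≤ (Uᵀ * U).trace := by
    refine Finset.sum_nonneg fun i _ => ?_
    simp only [diag_apply, mul_apply, transpose_apply]
    exact Finset.sum_nonneg fun k _ => mul_self_nonneg _
  have htrV : 0 ≤ (Vᵀ * V).trace := by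
    refine Finset.sum_nonneg fun i _ => ?_
    simp only [diag_apply, mul_apply, transpose_apply]
    exact Finset.sum_nonneg fun k _ => mul_self_nonneg _
  have hfU : frobNorm U ^ 2 = (Uᵀ * U).trace := Real.sq_sqrt htrU
  have hfV : frobNorm V ^ 2 = (Vᵀ * V).trace := Real.sq_sqrt htrV
  -- put it together
  have hnuc : nuclearNorm X = ∑ i, (Uᵀ *ᵥ uh i) ⬝ᵥ (Vᵀ *ᵥ w i) := by
    unfold nuclearNorm singularValues
    exact Finset.sum_congr rfl fun i _ => key i
  rw [hnuc, hfU, hfV]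
  calc ∑ i, (Uᵀ *ᵥ uh i) ⬝ᵥ (Vᵀ *ᵥ w i)
      ≤ ∑ i, ((Uᵀ *ᵥ uh i) ⬝ᵥ (Uᵀ *ᵥ uh i) + (Vᵀ *ᵥ w i) ⬝ᵥ (Vᵀ *ᵥ w i)) / 2 :=
        Finset.sum_le_sum fun i _ => amgm_dot _ _
    _ = ((∑ i, (Uᵀ *ᵥ uh i) ⬝ᵥ (Uᵀ *ᵥ uh i)) + ∑ i, (Vᵀ *ᵥ w i) ⬝ᵥ (Vᵀ *ᵥ w i)) / 2 := by
        rw [← Finset.sum_add_distrib, Finset.sum_div]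
    _ ≤ ((Uᵀ * U).trace + (Vᵀ * V).trace) / 2 := by
        rw [hb]; linarith
end

section
/- If X ∈ ℝ^{p×q} has compact SVD X = P Σ Qᵀ with rank r, then setting U = P √Σ and V = Q √Σ gives X = U Vᵀ and (‖U‖_F² + ‖V‖_F²)/2 = ‖X‖_*. -/
open Matrix

open scoped MatrixOrder in
lemma trace_sqrt {n : Type*} [Fintype n] [DecidableEq n] {A : Matrix n n ℝ}
    (hA : Matrix.PosSemidef A) :
    (CFC.sqrt A).trace = ∑ i, Real.sqrt (hA.1.eigenvalues i) := by
  rw [CFC.sqrt_eq_cfc, cfc_nnreal_eq_real _ A, hA.1.cfc_eq]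
  rw [IsHermitian.cfc, Unitary.conjStarAlgAut_apply, Matrix.trace_mul_cycle]
  have h1 : (star hA.1.eigenvectorUnitary.1 : Matrix n n ℝ) * hA.1.eigenvectorUnitary.1 = 1 :=
    hA.1.eigenvectorUnitary.2.1
  rw [h1, Matrix.one_mul, Matrix.trace_diagonal]
  simp [Real.coe_toNNReal', Real.sqrt_nonneg, max_eq_left (hA.eigenvalues_nonneg _)]

open scoped MatrixOrder in
lemma nuclear_eq_trace_sqrt {m n : Type*} [Fintype m] [Fintype n] [DecidableEq n]
    (X : Matrix m n ℝ) {B : Matrix n n ℝ} (hB : Matrix.PosSemidef B)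
    (hB2 : B ^ 2 = Xᵀ * X) : nuclearNorm X = B.trace := by
  have hA : Matrix.PosSemidef (Xᵀ * X) := by
    have := Matrix.posSemidef_conjTranspose_mul_self X
    rwa [Matrix.conjTranspose_eq_transpose_of_trivial] at this
  have hBs : B = CFC.sqrt (Xᵀ * X) := by
    rw [← hB2]; exact (CFC.sqrt_sq B hB.nonneg).symm
  rw [hBs, trace_sqrt hA]
  unfold nuclearNorm singularValues
  rfl

theorem stmt1 {p q r : ℕ} (X : Matrix (Fin p) (Fin q) ℝ)
    (P : Matrix (Fin p) (Fin r) ℝ) (Q : Matrix (Fin q) (Fin r) ℝ)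
    (S : Matrix (Fin r) (Fin r) ℝ)
    (hP : Pᵀ * P = 1) (hQ : Qᵀ * Q = 1)
    (hdiag : ∀ i j, i ≠ j → S i j = 0) (hpos : ∀ i, 0 < S i i)
    (hX : X = P * S * Qᵀ) :
    X = (P * S.map Real.sqrt) * (Q * S.map Real.sqrt)ᵀ ∧
      (frobNorm (P * S.map Real.sqrt) ^ 2 + frobNorm (Q * S.map Real.sqrt) ^ 2) / 2
        = nuclearNorm X := by
  set M := S.map Real.sqrt with hM
  have hMT : Mᵀ = M := by
    ext i j
    simp only [hM, Matrix.transpose_apply, Matrix.map_apply]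
    rcases eq_or_ne i j with h | h
    · rw [h]
    · rw [hdiag i j h, hdiag j i (Ne.symm h)]
  have hMM : M * M = S := by
    ext i j
    simp only [Matrix.mul_apply, hM, Matrix.map_apply]
    rcases eq_or_ne i j with h | h
    · subst h
      rw [Finset.sum_eq_single i]
      · exact Real.mul_self_sqrt (hpos i).le
      · intro k _ hk; rw [hdiag k i hk, Real.sqrt_zero, mul_zero]
      · simp
    · rw [hdiag i j h]
      apply Finset.sum_eq_zero
      intro k _
      rcases eq_or_ne i k with h2 | h2
      · subst h2; rw [hdiag i j h, Real.sqrt_zero, mul_zero]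
      · rw [hdiag i k h2, Real.sqrt_zero, zero_mul]
  have hfact : X = (P * M) * (Q * M)ᵀ := by
    rw [hX, Matrix.transpose_mul, hMT, ← hMM]
    simp only [Matrix.mul_assoc]
  have hStr : Matrix.trace S = ∑ i, S i i := rfl
  have hStr_nonneg : 0 ≤ Matrix.trace S := by
    rw [hStr]; exact Finset.sum_nonneg fun i _ => (hpos i).le
  have hfrob : ∀ {k : ℕ} (W : Matrix (Fin k) (Fin r) ℝ), Wᵀ * W = 1 →
      frobNorm (W * M) ^ 2 = Matrix.trace S := by
    intro k W hW
    have h1 : (W * M)ᵀ * (W * M) = S := by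
      rw [Matrix.transpose_mul, hMT]
      simp only [Matrix.mul_assoc]
      rw [← Matrix.mul_assoc Wᵀ W M, hW, Matrix.one_mul, hMM]
    rw [frobNorm, h1, Real.sq_sqrt hStr_nonneg]
  -- nuclear norm
  have hB : Matrix.PosSemidef (Q * M * (Q * M)ᵀ) := by
    have := Matrix.posSemidef_self_mul_conjTranspose (Q * M)
    rwa [Matrix.conjTranspose_eq_transpose_of_trivial] at this
  have hBQ : Q * M * (Q * M)ᵀ = Q * S * Qᵀ := by
    rw [Matrix.transpose_mul, hMT, ← hMM]
    simp only [Matrix.mul_assoc]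
  have hcanQ : ∀ {k : ℕ} (Z : Matrix (Fin r) (Fin k) ℝ), Qᵀ * (Q * Z) = Z := by
    intro k Z; rw [← Matrix.mul_assoc, hQ, Matrix.one_mul]
  have hcanP : ∀ {k : ℕ} (Z : Matrix (Fin r) (Fin k) ℝ), Pᵀ * (P * Z) = Z := by
    intro k Z; rw [← Matrix.mul_assoc, hP, Matrix.one_mul]
  have hSt : Sᵀ = S := by
    ext i j
    rcases eq_or_ne i j with h | h
    · subst h; rw [Matrix.transpose_apply]
    · rw [Matrix.transpose_apply, hdiag i j h, hdiag j i (Ne.symm h)]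
  have hB2 : (Q * M * (Q * M)ᵀ) ^ 2 = Xᵀ * X := by
    rw [hBQ, hX, pow_two]
    rw [Matrix.transpose_mul, Matrix.transpose_mul, Matrix.transpose_transpose, hSt]
    simp only [Matrix.mul_assoc, hcanQ, hcanP]
  have hnuc : nuclearNorm X = Matrix.trace S := by
    rw [nuclear_eq_trace_sqrt X hB hB2, hBQ, Matrix.trace_mul_cycle, hQ, Matrix.one_mul]
  refine ⟨hfact, ?_⟩
  rw [hfrob P hP, hfrob Q hQ, hnuc]
  ring
end

section
/- Let W₁ = [U₁ᵀ V₁ᵀ]ᵀ and W₂ = [U₂ᵀ V₂ᵀ]ᵀ in ℝ^{(p+q)×r} both satisfy the balance condition UᵢᵀUᵢ = VᵢᵀVᵢ. Then ‖P_on(W₁W₁ᵀ − W₂W₂ᵀ)‖_F² ≤ ‖P_off(W₁W₁ᵀ − W₂W₂ᵀ)‖_F², i.e., ‖U₁U₁ᵀ − U₂U₂ᵀ‖_F² + ‖V₁V₁ᵀ − V₂V₂ᵀ‖_F² ≤ 2‖U₁V₁ᵀ − U₂V₂ᵀ‖_F². -/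
open Matrix

noncomputable def spectralNorm' {m n : Type*} [Fintype m] [Fintype n] [DecidableEq m] [DecidableEq n]
    (X : Matrix m n ℝ) : ℝ :=
  ‖LinearMap.toContinuousLinearMap (Matrix.toEuclideanLin X)‖

lemma trace_tt_nonneg {m n : Type*} [Fintype m] [Fintype n] (X : Matrix m n ℝ) :
    0 ≤ (Xᵀ * X).trace := by
  rw [Matrix.trace]
  refine Finset.sum_nonneg fun j _ => ?_
  simp [Matrix.diag, Matrix.mul_apply]
  exact Finset.sum_nonneg fun i _ => mul_self_nonneg _

lemma trace_tt_nonneg' {m n : Type*} [Fintype m] [Fintype n] (X : Matrix m n ℝ) :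
    0 ≤ (X * Xᵀ).trace := by
  have := trace_tt_nonneg Xᵀ
  simpa using this

lemma frob_sq {m n : Type*} [Fintype m] [Fintype n] (X : Matrix m n ℝ) :
    (Real.sqrt ((Xᵀ * X).trace)) ^ 2 = (Xᵀ * X).trace :=
  Real.sq_sqrt (trace_tt_nonneg X)

lemma tr4 {m n r : Type*} [Fintype m] [Fintype n] [Fintype r]
    (X Z : Matrix m r ℝ) (Y W : Matrix n r ℝ) :
    ((X * Yᵀ)ᵀ * (Z * Wᵀ)).trace = ((Xᵀ * Z) * (Wᵀ * Y)).trace := by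
  rw [Matrix.transpose_mul, Matrix.transpose_transpose]
  rw [show Y * Xᵀ * (Z * Wᵀ) = Y * (Xᵀ * Z * Wᵀ) by rw [Matrix.mul_assoc, Matrix.mul_assoc]]
  rw [Matrix.trace_mul_comm, Matrix.mul_assoc]

lemma tr_sub4 {m n r : Type*} [Fintype m] [Fintype n] [Fintype r]
    (X Z : Matrix m r ℝ) (Y W : Matrix n r ℝ) :
    ((X * Yᵀ - Z * Wᵀ)ᵀ * (X * Yᵀ - Z * Wᵀ)).trace
      = ((Xᵀ * X) * (Yᵀ * Y)).trace + ((Zᵀ * Z) * (Wᵀ * W)).trace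
        - ((Xᵀ * Z) * (Wᵀ * Y)).trace - ((Zᵀ * X) * (Yᵀ * W)).trace := by
  rw [Matrix.transpose_sub, Matrix.sub_mul, Matrix.mul_sub, Matrix.mul_sub,
    Matrix.trace_sub, Matrix.trace_sub, Matrix.trace_sub, tr4, tr4, tr4, tr4]
  ring


theorem stmt4 {p q r : ℕ}
    (U₁ U₂ : Matrix (Fin p) (Fin r) ℝ) (V₁ V₂ : Matrix (Fin q) (Fin r) ℝ)
    (hbal₁ : U₁ᵀ * U₁ = V₁ᵀ * V₁) (hbal₂ : U₂ᵀ * U₂ = V₂ᵀ * V₂) :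
    frobNorm (U₁ * U₁ᵀ - U₂ * U₂ᵀ) ^ 2 + frobNorm (V₁ * V₁ᵀ - V₂ * V₂ᵀ) ^ 2
      ≤ 2 * frobNorm (U₁ * V₁ᵀ - U₂ * V₂ᵀ) ^ 2 := by
  simp only [frobNorm]
  rw [frob_sq, frob_sq, frob_sq, tr_sub4, tr_sub4, tr_sub4, ← hbal₁, ← hbal₂]
  set A := U₁ᵀ * U₂ with hA
  set B := V₁ᵀ * V₂ with hB
  have hAt : U₂ᵀ * U₁ = Aᵀ := by rw [hA, Matrix.transpose_mul, Matrix.transpose_transpose]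
  have hBt : V₂ᵀ * V₁ = Bᵀ := by rw [hB, Matrix.transpose_mul, Matrix.transpose_transpose]
  rw [hAt, hBt]
  have hpos : 0 ≤ ((A - B) * (A - B)ᵀ).trace := trace_tt_nonneg' _
  have hexp : ((A - B) * (A - B)ᵀ).trace
      = (A * Aᵀ).trace - (A * Bᵀ).trace - (B * Aᵀ).trace + (B * Bᵀ).trace := by
    rw [Matrix.transpose_sub, Matrix.sub_mul, Matrix.mul_sub, Matrix.mul_sub,
      Matrix.trace_sub, Matrix.trace_sub, Matrix.trace_sub]
    ring
  have h1 : (A * Aᵀ).trace = (Aᵀ * A).trace := Matrix.trace_mul_comm _ _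
  have h2 : (B * Bᵀ).trace = (Bᵀ * B).trace := Matrix.trace_mul_comm _ _
  have h3 : (B * Aᵀ).trace = (Aᵀ * B).trace := Matrix.trace_mul_comm _ _
  have h4 : (A * Bᵀ).trace = (Bᵀ * A).trace := Matrix.trace_mul_comm _ _
  linarith
end

section
/- Let W = [Uᵀ Vᵀ]ᵀ be a critical point of g(U,V) = f(UVᵀ) + (λ/2)(‖U‖_F²+‖V‖_F²) and suppose additionally that ‖∇f(UVᵀ)‖ ≤ λ (spectral norm). Then X = UVᵀ is a global minimizer of X ↦ f(X) + λ‖X‖_*, where f is convex and differentiable. -/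
open Matrix

attribute [local instance] Matrix.normedAddCommGroup Matrix.normedSpace

set_option linter.unusedSectionVars false
set_option maxHeartbeats 1000000

namespace Helper

section Spectral
variable {m n : Type*} [Fintype m] [Fintype n] [DecidableEq m] [DecidableEq n]
variable {m n : Type*} [Fintype m] [Fintype n] [DecidableEq m] [DecidableEq n]

lemma dot_self_eigenbasis {A : Matrix n n ℝ} (hA : A.IsHermitian) (j : n) :
    ⇑(hA.eigenvectorBasis j) ⬝ᵥ ⇑(hA.eigenvectorBasis j) = 1 := by
  have h2 : (inner (𝕜 := ℝ) (hA.eigenvectorBasis j) (hA.eigenvectorBasis j)) = (1:ℝ) := by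
    rw [real_inner_self_eq_norm_sq, hA.eigenvectorBasis.orthonormal.1 j]; norm_num
  rw [← h2, EuclideanSpace.inner_eq_star_dotProduct]
  simp [dotProduct]

lemma norm_mulVec_le (G : Matrix m n ℝ) (x : EuclideanSpace ℝ n) {l : ℝ}
    (hspec : matSpectralNorm G ≤ l) (hx : ‖x‖ = 1) :
    (G *ᵥ ⇑x) ⬝ᵥ (G *ᵥ ⇑x) ≤ l * l := by
  have h1 : ‖LinearMap.toContinuousLinearMap (Matrix.toEuclideanLin G) x‖ ≤ l := by
    calc ‖LinearMap.toContinuousLinearMap (Matrix.toEuclideanLin G) x‖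
        ≤ matSpectralNorm G * ‖x‖ := (LinearMap.toContinuousLinearMap (Matrix.toEuclideanLin G)).le_opNorm x
      _ ≤ l := by rw [hx, mul_one]; exact hspec
  have h2 : LinearMap.toContinuousLinearMap (Matrix.toEuclideanLin G) x
      = (WithLp.equiv 2 (m → ℝ)).symm (G *ᵥ ⇑x) := by
    simp [Matrix.toEuclideanLin_apply]
  have h3 : ‖(WithLp.equiv 2 (m → ℝ)).symm (G *ᵥ ⇑x)‖ ^ 2 = (G *ᵥ ⇑x) ⬝ᵥ (G *ᵥ ⇑x) := by
    rw [EuclideanSpace.norm_eq, Real.sq_sqrt (by positivity)]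
    simp [dotProduct, Real.norm_eq_abs, sq_abs, sq]
  calc (G *ᵥ ⇑x) ⬝ᵥ (G *ᵥ ⇑x) = ‖(WithLp.equiv 2 (m → ℝ)).symm (G *ᵥ ⇑x)‖ ^ 2 := h3.symm
    _ ≤ l ^ 2 := by
        have h0 : (0:ℝ) ≤ ‖(WithLp.equiv 2 (m → ℝ)).symm (G *ᵥ ⇑x)‖ := norm_nonneg _
        have := h2 ▸ h1
        nlinarith
    _ = l * l := sq l

lemma neg_dot_le (a b : m → ℝ) : -(a ⬝ᵥ b) ≤ Real.sqrt (a ⬝ᵥ a) * Real.sqrt (b ⬝ᵥ b) := by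
  have hcs := Finset.sum_mul_sq_le_sq_mul_sq Finset.univ a b
  have h1 : -(a ⬝ᵥ b) ≤ |a ⬝ᵥ b| := neg_le_abs _
  have h2 : |a ⬝ᵥ b| = Real.sqrt ((a ⬝ᵥ b) ^ 2) := (Real.sqrt_sq_eq_abs _).symm
  have ha : a ⬝ᵥ a = ∑ i, a i ^ 2 := by simp [dotProduct, sq]
  have hb : b ⬝ᵥ b = ∑ i, b i ^ 2 := by simp [dotProduct, sq]
  calc -(a ⬝ᵥ b) ≤ |a ⬝ᵥ b| := h1
    _ = Real.sqrt ((a ⬝ᵥ b) ^ 2) := h2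
    _ ≤ Real.sqrt ((a ⬝ᵥ a) * (b ⬝ᵥ b)) := by
        apply Real.sqrt_le_sqrt; rw [ha, hb]; exact hcs
    _ = Real.sqrt (a ⬝ᵥ a) * Real.sqrt (b ⬝ᵥ b) := Real.sqrt_mul (by rw [ha]; positivity) _

-- completeness of eigenbasis columns
lemma sum_eig_outer {A : Matrix n n ℝ} (hA : A.IsHermitian) (k k' : n) :
    ∑ j, ⇑(hA.eigenvectorBasis j) k * ⇑(hA.eigenvectorBasis j) k' = (1 : Matrix n n ℝ) k k' := by
  have h := Matrix.mem_unitaryGroup_iff.mp hA.eigenvectorUnitary.2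
  have := congrFun (congrFun (congrArg (fun M : Matrix n n ℝ => M) h) k) k'
  simp only [Matrix.mul_apply, Matrix.star_eq_conjTranspose, Matrix.conjTranspose_apply,
    star_trivial, Matrix.IsHermitian.eigenvectorUnitary_apply] at this
  simpa using this

lemma trace_eq_sum_dot {A : Matrix n n ℝ} (hA : A.IsHermitian) (M : Matrix n n ℝ) :
    M.trace = ∑ j, ⇑(hA.eigenvectorBasis j) ⬝ᵥ (M *ᵥ ⇑(hA.eigenvectorBasis j)) := by
  have : ∀ j, ⇑(hA.eigenvectorBasis j) ⬝ᵥ (M *ᵥ ⇑(hA.eigenvectorBasis j))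
      = ∑ k, ∑ k', M k k' * (⇑(hA.eigenvectorBasis j) k * ⇑(hA.eigenvectorBasis j) k') := by
    intro j
    simp only [dotProduct, Matrix.mulVec, dotProduct, Finset.mul_sum]
    congr 1; ext k; congr 1; ext k'; ring
  rw [Finset.sum_congr rfl (fun j _ => this j), Finset.sum_comm]
  have : ∀ k, ∑ j, ∑ k', M k k' * (⇑(hA.eigenvectorBasis j) k * ⇑(hA.eigenvectorBasis j) k')
      = ∑ k', M k k' * (1 : Matrix n n ℝ) k k' := by
    intro k
    rw [Finset.sum_comm]
    refine Finset.sum_congr rfl fun k' _ => ?_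
    rw [← Finset.mul_sum, sum_eig_outer hA]
  rw [Finset.sum_congr rfl (fun k _ => this k)]
  simp [Matrix.trace, Matrix.one_apply, Finset.sum_ite_eq, Matrix.diag]

lemma ext_of_dot_eig {A : Matrix n n ℝ} (hA : A.IsHermitian) {x y : n → ℝ}
    (h : ∀ j, ⇑(hA.eigenvectorBasis j) ⬝ᵥ x = ⇑(hA.eigenvectorBasis j) ⬝ᵥ y) : x = y := by
  funext k
  have hx : ∀ z : n → ℝ, z k = ∑ j, ⇑(hA.eigenvectorBasis j) k * (⇑(hA.eigenvectorBasis j) ⬝ᵥ z) := by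
    intro z
    have : ∀ j, ⇑(hA.eigenvectorBasis j) k * (⇑(hA.eigenvectorBasis j) ⬝ᵥ z)
        = ∑ k', (⇑(hA.eigenvectorBasis j) k * ⇑(hA.eigenvectorBasis j) k') * z k' := by
      intro j; simp only [dotProduct, Finset.mul_sum]
      refine Finset.sum_congr rfl fun k' _ => by ring
    rw [Finset.sum_congr rfl (fun j _ => this j), Finset.sum_comm]
    have : ∀ k', ∑ j, (⇑(hA.eigenvectorBasis j) k * ⇑(hA.eigenvectorBasis j) k') * z k'
        = (1 : Matrix n n ℝ) k k' * z k' := by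
      intro k'; rw [← Finset.sum_mul, sum_eig_outer hA]
    rw [Finset.sum_congr rfl (fun k' _ => this k')]
    simp [Matrix.one_apply]
  rw [hx x, hx y]
  exact Finset.sum_congr rfl fun j _ => by rw [h j]


lemma dot_mulVec_symm {A : Matrix n n ℝ} (hA : A.IsHermitian) (w v : n → ℝ) :
    w ⬝ᵥ (A *ᵥ v) = (A *ᵥ w) ⬝ᵥ v := by
  rw [Matrix.dotProduct_mulVec, ← Matrix.vecMul_transpose,
    ← Matrix.conjTranspose_eq_transpose_of_trivial, hA.eq]

lemma eigen_sqrt {A : Matrix n n ℝ} (hA : A.PosSemidef) {μ : ℝ} {v : n → ℝ}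
    (hv : (A * A) *ᵥ v = μ • v) : A *ᵥ v = Real.sqrt μ • v := by
  apply Helper.ext_of_dot_eig hA.1
  intro j
  set w := ⇑(hA.1.eigenvectorBasis j) with hw
  set e := hA.1.eigenvalues j with he
  have hAw : A *ᵥ w = e • w := hA.1.mulVec_eigenvectorBasis j
  have h1 : w ⬝ᵥ (A *ᵥ v) = e * (w ⬝ᵥ v) := by
    rw [dot_mulVec_symm hA.1, hAw, smul_dotProduct]; rfl
  have h2 : e * e * (w ⬝ᵥ v) = μ * (w ⬝ᵥ v) := by
    have : w ⬝ᵥ ((A * A) *ᵥ v) = μ * (w ⬝ᵥ v) := by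
      rw [hv, dotProduct_smul]; rfl
    rw [← this, ← Matrix.mulVec_mulVec, dot_mulVec_symm hA.1, hAw]
    rw [show (e • w) ⬝ᵥ (A *ᵥ v) = e * (w ⬝ᵥ (A *ᵥ v)) from smul_dotProduct e w _, h1]
    ring
  have h3 : w ⬝ᵥ (Real.sqrt μ • v) = Real.sqrt μ * (w ⬝ᵥ v) := by
    rw [dotProduct_smul]; rfl
  rw [h1, h3]
  rcases eq_or_ne (w ⬝ᵥ v) 0 with h0 | h0
  · rw [h0, mul_zero, mul_zero]
  · have he2 : e * e = μ := by
      exact mul_right_cancel₀ h0 h2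
    have hnn : 0 ≤ e := hA.eigenvalues_nonneg j
    have : Real.sqrt μ = e := by
      rw [← he2, Real.sqrt_mul_self hnn]
    rw [this]

lemma trace_ge {l : ℝ} (hl : 0 ≤ l) (G Y : Matrix m n ℝ) (hspec : matSpectralNorm G ≤ l) :
    -(l * nuclearNorm Y) ≤ (Gᵀ * Y).trace := by
  set hB := (show (Yᵀ * Y).IsHermitian by
    simpa using Matrix.isHermitian_conjTranspose_mul_self Y) with hBdef
  have htr := trace_eq_sum_dot hB (Gᵀ * Y)
  have key : ∀ j, -(l * singularValues Y j)
      ≤ ⇑(hB.eigenvectorBasis j) ⬝ᵥ ((Gᵀ * Y) *ᵥ ⇑(hB.eigenvectorBasis j)) := by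
    intro j
    set v := ⇑(hB.eigenvectorBasis j) with hv
    have hsplit : v ⬝ᵥ ((Gᵀ * Y) *ᵥ v) = (G *ᵥ v) ⬝ᵥ (Y *ᵥ v) := by
      rw [← Matrix.mulVec_mulVec, Matrix.dotProduct_mulVec, Matrix.vecMul_transpose]
    have hbb : (Y *ᵥ v) ⬝ᵥ (Y *ᵥ v) = hB.eigenvalues j := by
      have h1 : v ⬝ᵥ ((Yᵀ * Y) *ᵥ v) = (Y *ᵥ v) ⬝ᵥ (Y *ᵥ v) := by
        rw [← Matrix.mulVec_mulVec, Matrix.dotProduct_mulVec, Matrix.vecMul_transpose]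
      have h2 : (Yᵀ * Y) *ᵥ v = hB.eigenvalues j • v := hB.mulVec_eigenvectorBasis j
      rw [← h1, h2, dotProduct_smul, smul_eq_mul, dot_self_eigenbasis hB j, mul_one]
    have haa : (G *ᵥ v) ⬝ᵥ (G *ᵥ v) ≤ l * l :=
      norm_mulVec_le G (hB.eigenvectorBasis j) hspec (hB.eigenvectorBasis.orthonormal.1 j)
    have hcs := neg_dot_le (G *ᵥ v) (Y *ᵥ v)
    have hsa : Real.sqrt ((G *ᵥ v) ⬝ᵥ (G *ᵥ v)) ≤ l := by
      calc Real.sqrt ((G *ᵥ v) ⬝ᵥ (G *ᵥ v)) ≤ Real.sqrt (l * l) := Real.sqrt_le_sqrt haa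
        _ = l := Real.sqrt_mul_self hl
    have hsb : Real.sqrt ((Y *ᵥ v) ⬝ᵥ (Y *ᵥ v)) = singularValues Y j := by
      rw [hbb]; rfl
    rw [hsplit]
    have hnn : 0 ≤ Real.sqrt ((Y *ᵥ v) ⬝ᵥ (Y *ᵥ v)) := Real.sqrt_nonneg _
    calc -(l * singularValues Y j) = -(l * Real.sqrt ((Y *ᵥ v) ⬝ᵥ (Y *ᵥ v))) := by rw [hsb]
      _ ≤ -(Real.sqrt ((G *ᵥ v) ⬝ᵥ (G *ᵥ v)) * Real.sqrt ((Y *ᵥ v) ⬝ᵥ (Y *ᵥ v))) := by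
          apply neg_le_neg; exact mul_le_mul_of_nonneg_right hsa hnn
      _ ≤ (G *ᵥ v) ⬝ᵥ (Y *ᵥ v) := by
          have := neg_dot_le (G *ᵥ v) (Y *ᵥ v)
          linarith
  rw [htr]
  have : -(l * nuclearNorm Y) = ∑ j, -(l * singularValues Y j) := by
    simp [nuclearNorm, Finset.mul_sum, Finset.sum_neg_distrib]
  rw [this]
  exact Finset.sum_le_sum fun j _ => key j

lemma nuclear_eq_of_balanced {r : Type*} [Fintype r]
    (U : Matrix m r ℝ) (V : Matrix n r ℝ) (hbal : Uᵀ * U = Vᵀ * V) :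
    nuclearNorm (U * Vᵀ) = (V * Vᵀ).trace := by
  set X := U * Vᵀ with hX
  set A := V * Vᵀ with hA
  have hApsd : A.PosSemidef := by
    have h := Matrix.posSemidef_self_mul_conjTranspose V
    rwa [Matrix.conjTranspose_eq_transpose_of_trivial] at h
  have hXX : Xᵀ * X = A * A := by
    calc Xᵀ * X = V * Uᵀ * (U * Vᵀ) := by rw [hX, Matrix.transpose_mul, Matrix.transpose_transpose]
      _ = V * (Uᵀ * U) * Vᵀ := by simp only [Matrix.mul_assoc]
      _ = V * (Vᵀ * V) * Vᵀ := by rw [hbal]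
      _ = A * A := by rw [hA]; simp only [Matrix.mul_assoc]
  set hB := (show (Xᵀ * X).IsHermitian by
    simpa using Matrix.isHermitian_conjTranspose_mul_self X) with hBdef
  have hμnn : ∀ j, 0 ≤ hB.eigenvalues j := fun j =>
    Matrix.eigenvalues_conjTranspose_mul_self_nonneg X j
  have heig : ∀ j, A *ᵥ ⇑(hB.eigenvectorBasis j)
      = Real.sqrt (hB.eigenvalues j) • ⇑(hB.eigenvectorBasis j) := by
    intro j
    apply eigen_sqrt hApsd
    rw [← hXX]
    exact hB.mulVec_eigenvectorBasis j
  have htr := trace_eq_sum_dot hB A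
  rw [htr]
  unfold nuclearNorm singularValues
  refine Finset.sum_congr rfl fun j _ => ?_
  rw [heig j, dotProduct_smul, smul_eq_mul, dot_self_eigenbasis hB j, mul_one]

end Spectral

section Calc
variable {m n r : Type*} [Fintype m] [Fintype n] [Fintype r]
variable {m n r : Type*} [Fintype m] [Fintype n] [Fintype r]

def mulLin (U : Matrix m r ℝ) (V : Matrix n r ℝ) :
    (Matrix m r ℝ × Matrix n r ℝ) →ₗ[ℝ] Matrix m n ℝ where
  toFun W := W.1 * Vᵀ + U * W.2ᵀ
  map_add' x y := by
    simp only [Prod.fst_add, Prod.snd_add, Matrix.transpose_add, Matrix.add_mul, Matrix.mul_add]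
    abel
  map_smul' c x := by
    simp only [Prod.smul_fst, Prod.smul_snd, Matrix.transpose_smul, Matrix.smul_mul,
      Matrix.mul_smul, smul_add, RingHom.id_apply]

def quadLin (M₀ : Matrix m r ℝ) : Matrix m r ℝ →ₗ[ℝ] ℝ where
  toFun H := 2 * (M₀ᵀ * H).trace
  map_add' x y := by
    show 2 * (M₀ᵀ * (x + y)).trace = 2 * (M₀ᵀ * x).trace + 2 * (M₀ᵀ * y).trace
    rw [Matrix.mul_add, Matrix.trace_add]; ring
  map_smul' c x := by
    show 2 * (M₀ᵀ * (c • x)).trace = (RingHom.id ℝ) c • (2 * (M₀ᵀ * x).trace)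
    rw [Matrix.mul_smul, Matrix.trace_smul, RingHom.id_apply, smul_eq_mul, smul_eq_mul]; ring

lemma isLittleO_quad {E F : Type*} [NormedAddCommGroup E] [NormedAddCommGroup F]
    (C : ℝ) (hC : 0 ≤ C) (g : E → F) (hg : ∀ x, ‖g x‖ ≤ C * ‖x‖ * ‖x‖) :
    g =o[nhds 0] (fun x : E => x) := by
  rw [Asymptotics.isLittleO_iff]
  intro c hc
  filter_upwards [Metric.ball_mem_nhds (0 : E) (show (0:ℝ) < c / (C + 1) by positivity)] with x hx
  rw [mem_ball_zero_iff] at hx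
  have h0 : (0:ℝ) ≤ ‖x‖ := norm_nonneg _
  have h1 : ‖x‖ * (C + 1) < c := (lt_div_iff₀ (by positivity)).mp hx
  calc ‖g x‖ ≤ C * ‖x‖ * ‖x‖ := hg x
    _ ≤ c * ‖x‖ := by nlinarith [mul_le_mul_of_nonneg_right h1.le h0, mul_nonneg h0 h0]
  
lemma ttms_eq (M : Matrix m r ℝ) : (Mᵀ * M).trace = ∑ j, ∑ k, (M k j) ^ 2 := by
  simp [Matrix.trace, Matrix.mul_apply, Matrix.diag, sq, Matrix.transpose_apply]

lemma hasFDerivAt_mulProd (U : Matrix m r ℝ) (V : Matrix n r ℝ) :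
    HasFDerivAt (fun W : Matrix m r ℝ × Matrix n r ℝ => W.1 * W.2ᵀ)
      (LinearMap.toContinuousLinearMap (mulLin U V)) (U, V) := by
  apply hasFDerivAt_iff_isLittleO_nhds_zero.mpr
  have hrem : ∀ H : Matrix m r ℝ × Matrix n r ℝ,
      ((U, V) + H).1 * ((U, V) + H).2ᵀ - U * Vᵀ
        - LinearMap.toContinuousLinearMap (mulLin U V) H = H.1 * H.2ᵀ := by
    intro H
    simp only [LinearMap.coe_toContinuousLinearMap', mulLin, LinearMap.coe_mk, AddHom.coe_mk,
      Prod.fst_add, Prod.snd_add, Matrix.transpose_add, Matrix.add_mul, Matrix.mul_add]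
    abel
  have hbound : ∀ H : Matrix m r ℝ × Matrix n r ℝ,
      ‖H.1 * H.2ᵀ‖ ≤ (Fintype.card r) * ‖H‖ * ‖H‖ := by
    intro H
    rw [Matrix.norm_le_iff (by positivity)]
    intro i j
    rw [Matrix.mul_apply, Real.norm_eq_abs]
    calc |∑ k, H.1 i k * H.2ᵀ k j| ≤ ∑ k, |H.1 i k * H.2ᵀ k j| :=
          Finset.abs_sum_le_sum_abs _ _
      _ ≤ ∑ _k : r, ‖H‖ * ‖H‖ := by
          refine Finset.sum_le_sum fun k _ => ?_
          rw [abs_mul]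
          have h1 : |H.1 i k| ≤ ‖H‖ :=
            le_trans (Matrix.norm_entry_le_entrywise_sup_norm H.1) (norm_fst_le H)
          have h2 : |H.2ᵀ k j| ≤ ‖H‖ :=
            le_trans (Matrix.norm_entry_le_entrywise_sup_norm H.2) (norm_snd_le H)
          exact mul_le_mul h1 h2 (abs_nonneg _) (le_trans (abs_nonneg _) h1)
      _ = (Fintype.card r : ℝ) * ‖H‖ * ‖H‖ := by
          rw [Finset.sum_const, Finset.card_univ, nsmul_eq_mul]; ring
  have hlittle := isLittleO_quad (Fintype.card r : ℝ) (by positivity)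
    (fun H : Matrix m r ℝ × Matrix n r ℝ => H.1 * H.2ᵀ) hbound
  exact hlittle.congr' (Filter.Eventually.of_forall fun H => (hrem H).symm)
    Filter.EventuallyEq.rfl

lemma hasFDerivAt_quad (M₀ : Matrix m r ℝ) :
    HasFDerivAt (fun M : Matrix m r ℝ => (Mᵀ * M).trace)
      (LinearMap.toContinuousLinearMap (quadLin M₀)) M₀ := by
  apply hasFDerivAt_iff_isLittleO_nhds_zero.mpr
  have hrem : ∀ H : Matrix m r ℝ,
      ((M₀ + H)ᵀ * (M₀ + H)).trace - (M₀ᵀ * M₀).trace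
        - LinearMap.toContinuousLinearMap (quadLin M₀) H = (Hᵀ * H).trace := by
    intro H
    simp only [LinearMap.coe_toContinuousLinearMap', quadLin, LinearMap.coe_mk, AddHom.coe_mk,
      Matrix.transpose_add, Matrix.add_mul, Matrix.mul_add, Matrix.trace_add]
    have : (Hᵀ * M₀).trace = (M₀ᵀ * H).trace := by
      rw [← Matrix.trace_transpose (M₀ᵀ * H), Matrix.transpose_mul, Matrix.transpose_transpose]
    rw [this]; ring
  have hbound : ∀ H : Matrix m r ℝ,
      ‖(Hᵀ * H).trace‖ ≤ (Fintype.card m * Fintype.card r : ℝ) * ‖H‖ * ‖H‖ := by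
    intro H
    rw [ttms_eq, Real.norm_eq_abs]
    calc |∑ j, ∑ k, (H k j) ^ 2| ≤ ∑ j, ∑ k : m, ‖H‖ * ‖H‖ := by
          rw [abs_of_nonneg (by positivity)]
          refine Finset.sum_le_sum fun j _ => Finset.sum_le_sum fun k _ => ?_
          have h1 : |H k j| ≤ ‖H‖ := Matrix.norm_entry_le_entrywise_sup_norm H
          rw [← sq_abs, sq]
          exact mul_le_mul h1 h1 (abs_nonneg _) (le_trans (abs_nonneg _) h1)
      _ = (Fintype.card m * Fintype.card r : ℝ) * ‖H‖ * ‖H‖ := by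
          simp [Finset.sum_const, Finset.card_univ, nsmul_eq_mul]; ring
  have hlittle := isLittleO_quad _ (by positivity)
    (fun H : Matrix m r ℝ => (Hᵀ * H).trace) hbound
  exact hlittle.congr' (Filter.Eventually.of_forall fun H => (hrem H).symm)
    Filter.EventuallyEq.rfl
lemma ttms_nonneg (M : Matrix m r ℝ) : 0 ≤ (Mᵀ * M).trace := by
  rw [ttms_eq]; positivity

lemma eq_zero_of_ttms (M : Matrix m r ℝ) (h : (Mᵀ * M).trace = 0) : M = 0 := by
  rw [ttms_eq] at h
  ext i j
  have h1 : ∀ j' ∈ Finset.univ, (0:ℝ) ≤ ∑ k, (M k j') ^ 2 := fun _ _ => by positivity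
  have h2 := (Finset.sum_eq_zero_iff_of_nonneg h1).mp h j (Finset.mem_univ j)
  have h3 : ∀ k ∈ Finset.univ, (0:ℝ) ≤ (M k j) ^ 2 := fun _ _ => sq_nonneg _
  have h4 := (Finset.sum_eq_zero_iff_of_nonneg h3).mp h2 i (Finset.mem_univ i)
  simpa using pow_eq_zero_iff (n := 2) (by norm_num) |>.mp h4

lemma frob_sq (M : Matrix m r ℝ) : frobNorm M ^ 2 = (Mᵀ * M).trace :=
  Real.sq_sqrt (ttms_nonneg M)

end Calc

lemma convex_first_order {E : Type*} [NormedAddCommGroup E] [NormedSpace ℝ E]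
    {f : E → ℝ} (hconv : ConvexOn ℝ Set.univ f) (hf : Differentiable ℝ f) (X Y : E) :
    f X + fderiv ℝ f X (Y - X) ≤ f Y := by
  set ψ : ℝ → ℝ := fun t => f (t • (Y - X) + X) with hψ
  have hline : HasDerivAt (fun t : ℝ => t • (Y - X) + X) (Y - X) 0 := by
    have h1 : HasDerivAt (fun t : ℝ => t • (Y - X)) ((1:ℝ) • (Y - X)) 0 :=
      (hasDerivAt_id 0).smul_const (Y - X)
    simpa using h1.add_const X
  have hψ0 : (0:ℝ) • (Y - X) + X = X := by simp
  have hd : HasDerivAt ψ (fderiv ℝ f X (Y - X)) 0 := by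
    have hfd : HasFDerivAt f (fderiv ℝ f X) ((0:ℝ) • (Y - X) + X) := by
      rw [hψ0]; exact (hf X).hasFDerivAt
    have := hfd.comp_hasDerivAt 0 hline
    exact this
  have hψconv : ConvexOn ℝ Set.univ ψ := by
    have h := hconv.comp_affineMap (AffineMap.lineMap X Y)
    have he : ∀ t : ℝ, (AffineMap.lineMap X Y) t = t • (Y - X) + X := fun t => by
      simp [AffineMap.lineMap_apply]
    have : (f ∘ (AffineMap.lineMap X Y)) = ψ := by
      funext t; simp [Function.comp, he t, hψ]
    rw [this] at h
    simpa using h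
  -- slope bound: for t ∈ (0,1], (ψ t - ψ 0)/t ≤ ψ 1 - ψ 0
  have hslope : ∀ t : ℝ, t ∈ Set.Ioc (0:ℝ) 1 → (ψ t - ψ 0) / t ≤ ψ 1 - ψ 0 := by
    intro t ht
    obtain ⟨ht0, ht1⟩ := ht
    have hcvx := hψconv.2 (Set.mem_univ (0:ℝ)) (Set.mem_univ (1:ℝ))
      (show (0:ℝ) ≤ 1 - t by linarith) ht0.le (by ring : (1 - t) + t = 1)
    have : ψ t ≤ (1 - t) * ψ 0 + t * ψ 1 := by
      have harg : (1 - t) • (0:ℝ) + t • (1:ℝ) = t := by simp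
      simpa [harg, smul_eq_mul] using hcvx
    rw [div_le_iff₀ ht0]
    nlinarith
  have htend : Filter.Tendsto (fun t => (ψ t - ψ 0) / t) (nhdsWithin 0 (Set.Ioi 0))
      (nhds (fderiv ℝ f X (Y - X))) := by
    have h := hd.hasDerivWithinAt (s := Set.Ioi (0:ℝ))
    have := hasDerivWithinAt_iff_tendsto_slope.mp h
    have hsub : Set.Ioi (0:ℝ) \ {0} = Set.Ioi 0 := by
      ext x; simp (config := {decide := false}) only [Set.mem_diff, Set.mem_Ioi,
        Set.mem_singleton_iff, and_iff_left_iff_imp]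
      intro hx; exact ne_of_gt hx
    rw [hsub] at this
    refine this.congr' ?_
    filter_upwards [self_mem_nhdsWithin] with t ht
    simp [slope_def_field]
  have hle : fderiv ℝ f X (Y - X) ≤ ψ 1 - ψ 0 := by
    refine le_of_tendsto htend ?_
    filter_upwards [Ioc_mem_nhdsGT_of_mem (Set.mem_Ico.mpr ⟨le_refl 0, zero_lt_one⟩)] with t ht
    exact hslope t ht
  have hψ1 : ψ 1 = f Y := by simp [hψ]
  have hψ0' : ψ 0 = f X := by simp [hψ]
  rw [hψ1, hψ0'] at hle
  linarith

end Helper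

theorem stmt10 {p q r : ℕ} (f : Matrix (Fin p) (Fin q) ℝ → ℝ)
    (hconv : ConvexOn ℝ Set.univ f) (hf : Differentiable ℝ f)
    (gradf : Matrix (Fin p) (Fin q) ℝ → Matrix (Fin p) (Fin q) ℝ)
    (hgrad : ∀ X D, fderiv ℝ f X D = ((gradf X)ᵀ * D).trace)
    (l : ℝ) (hl : 0 < l)
    (U : Matrix (Fin p) (Fin r) ℝ) (V : Matrix (Fin q) (Fin r) ℝ)
    (hcrit : fderiv ℝ (fun W : Matrix (Fin p) (Fin r) ℝ × Matrix (Fin q) (Fin r) ℝ =>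
        f (W.1 * W.2ᵀ) + l / 2 * (frobNorm W.1 ^ 2 + frobNorm W.2 ^ 2)) (U, V) = 0)
    (hspec : matSpectralNorm (gradf (U * Vᵀ)) ≤ l) :
    ∀ Y : Matrix (Fin p) (Fin q) ℝ,
      f (U * Vᵀ) + l * nuclearNorm (U * Vᵀ) ≤ f Y + l * nuclearNorm Y := by
  intro Y
  classical
  set G := gradf (U * Vᵀ) with hGdef
  -- rewrite the regularizer using traces
  have hgfun : (fun W : Matrix (Fin p) (Fin r) ℝ × Matrix (Fin q) (Fin r) ℝ =>
        f (W.1 * W.2ᵀ) + l / 2 * (frobNorm W.1 ^ 2 + frobNorm W.2 ^ 2))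
      = (fun W : Matrix (Fin p) (Fin r) ℝ × Matrix (Fin q) (Fin r) ℝ =>
        f (W.1 * W.2ᵀ) + l / 2 * ((W.1ᵀ * W.1).trace + (W.2ᵀ * W.2).trace)) := by
    funext W
    rw [Helper.frob_sq, Helper.frob_sq]
  -- build the derivative of the factored objective
  have hmul := Helper.hasFDerivAt_mulProd U V
  have hF : HasFDerivAt
      (fun W : Matrix (Fin p) (Fin r) ℝ × Matrix (Fin q) (Fin r) ℝ => f (W.1 * W.2ᵀ))
      ((fderiv ℝ f (U * Vᵀ)).comp (LinearMap.toContinuousLinearMap (Helper.mulLin U V)))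
      (U, V) :=
    HasFDerivAt.comp (U, V) (hf (U * Vᵀ)).hasFDerivAt hmul
  have hq1 : HasFDerivAt
      (fun W : Matrix (Fin p) (Fin r) ℝ × Matrix (Fin q) (Fin r) ℝ => (W.1ᵀ * W.1).trace)
      ((LinearMap.toContinuousLinearMap (Helper.quadLin U)).comp
        (ContinuousLinearMap.fst ℝ (Matrix (Fin p) (Fin r) ℝ) (Matrix (Fin q) (Fin r) ℝ)))
      (U, V) :=
    HasFDerivAt.comp (g := fun M : Matrix (Fin p) (Fin r) ℝ => (Mᵀ * M).trace) (U, V) (Helper.hasFDerivAt_quad U) (hasFDerivAt_fst (𝕜 := ℝ) (p := (U, V)))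
  have hq2 : HasFDerivAt
      (fun W : Matrix (Fin p) (Fin r) ℝ × Matrix (Fin q) (Fin r) ℝ => (W.2ᵀ * W.2).trace)
      ((LinearMap.toContinuousLinearMap (Helper.quadLin V)).comp
        (ContinuousLinearMap.snd ℝ (Matrix (Fin p) (Fin r) ℝ) (Matrix (Fin q) (Fin r) ℝ)))
      (U, V) :=
    HasFDerivAt.comp (g := fun M : Matrix (Fin q) (Fin r) ℝ => (Mᵀ * M).trace) (U, V) (Helper.hasFDerivAt_quad V) (hasFDerivAt_snd (𝕜 := ℝ) (p := (U, V)))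
  have hsum : HasFDerivAt
      (fun W : Matrix (Fin p) (Fin r) ℝ × Matrix (Fin q) (Fin r) ℝ =>
        f (W.1 * W.2ᵀ) + l / 2 * ((W.1ᵀ * W.1).trace + (W.2ᵀ * W.2).trace))
      ((fderiv ℝ f (U * Vᵀ)).comp (LinearMap.toContinuousLinearMap (Helper.mulLin U V))
        + (l / 2) • ((LinearMap.toContinuousLinearMap (Helper.quadLin U)).comp
            (ContinuousLinearMap.fst ℝ (Matrix (Fin p) (Fin r) ℝ) (Matrix (Fin q) (Fin r) ℝ))
          + (LinearMap.toContinuousLinearMap (Helper.quadLin V)).comp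
            (ContinuousLinearMap.snd ℝ (Matrix (Fin p) (Fin r) ℝ) (Matrix (Fin q) (Fin r) ℝ))))
      (U, V) :=
    hF.add ((hq1.add hq2).const_mul (l / 2))
  have hd := hsum.fderiv
  rw [← hgfun, hcrit] at hd
  -- evaluate the vanishing derivative in arbitrary directions
  have heval1 : ∀ A : Matrix (Fin p) (Fin r) ℝ,
      fderiv ℝ f (U * Vᵀ) (A * Vᵀ) + l / 2 * (2 * (Uᵀ * A).trace) = 0 := by
    intro A
    have h := congrFun (congrArg (fun (T : _ →L[ℝ] ℝ) => (T : _ → ℝ)) hd.symm)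
      (A, (0 : Matrix (Fin q) (Fin r) ℝ))
    simpa [ContinuousLinearMap.add_apply, ContinuousLinearMap.comp_apply,
      ContinuousLinearMap.smul_apply, ContinuousLinearMap.coe_fst', ContinuousLinearMap.coe_snd',
      LinearMap.coe_toContinuousLinearMap', Helper.mulLin, Helper.quadLin, LinearMap.coe_mk,
      AddHom.coe_mk, smul_eq_mul, Matrix.transpose_zero, Matrix.mul_zero, Matrix.trace_zero]
      using h
  have heval2 : ∀ B : Matrix (Fin q) (Fin r) ℝ,
      fderiv ℝ f (U * Vᵀ) (U * Bᵀ) + l / 2 * (2 * (Vᵀ * B).trace) = 0 := by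
    intro B
    have h := congrFun (congrArg (fun (T : _ →L[ℝ] ℝ) => (T : _ → ℝ)) hd.symm)
      ((0 : Matrix (Fin p) (Fin r) ℝ), B)
    simpa [ContinuousLinearMap.add_apply, ContinuousLinearMap.comp_apply,
      ContinuousLinearMap.smul_apply, ContinuousLinearMap.coe_fst', ContinuousLinearMap.coe_snd',
      LinearMap.coe_toContinuousLinearMap', Helper.mulLin, Helper.quadLin, LinearMap.coe_mk,
      AddHom.coe_mk, smul_eq_mul, Matrix.zero_mul, Matrix.mul_zero, Matrix.trace_zero]
      using h
  -- first critical point equation : G * V + l • U = 0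
  have hU : G * V + l • U = 0 := by
    apply Helper.eq_zero_of_ttms
    set M := G * V + l • U with hM
    have htr : (Mᵀ * M).trace
        = fderiv ℝ f (U * Vᵀ) (M * Vᵀ) + l / 2 * (2 * (Uᵀ * M).trace) := by
      rw [hgrad]
      have hMt : Mᵀ * M = (Vᵀ * Gᵀ) * M + l • (Uᵀ * M) := by
        rw [hM, Matrix.transpose_add, Matrix.transpose_mul, Matrix.transpose_smul,
          Matrix.add_mul, Matrix.smul_mul]
      have hc : ((Vᵀ * Gᵀ) * M).trace = ((gradf (U * Vᵀ))ᵀ * (M * Vᵀ)).trace := by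
        rw [Matrix.trace_mul_cycle Vᵀ Gᵀ M, Matrix.trace_mul_comm]
      rw [hMt, Matrix.trace_add, Matrix.trace_smul, hc, smul_eq_mul]
      ring
    rw [htr]
    exact heval1 M
  -- second critical point equation : Gᵀ * U + l • V = 0
  have hV : Gᵀ * U + l • V = 0 := by
    apply Helper.eq_zero_of_ttms
    set M := Gᵀ * U + l • V with hM
    have htr : (Mᵀ * M).trace
        = fderiv ℝ f (U * Vᵀ) (U * Mᵀ) + l / 2 * (2 * (Vᵀ * M).trace) := by
      rw [hgrad]
      have hMt : Mᵀ * M = (Uᵀ * G) * M + l • (Vᵀ * M) := by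
        rw [hM, Matrix.transpose_add, Matrix.transpose_mul, Matrix.transpose_smul,
          Matrix.add_mul, Matrix.smul_mul, Matrix.transpose_transpose]
      have hc : ((Uᵀ * G) * M).trace = ((gradf (U * Vᵀ))ᵀ * (U * Mᵀ)).trace := by
        rw [← Matrix.trace_transpose (Gᵀ * (U * Mᵀ)), Matrix.transpose_mul,
          Matrix.transpose_mul, Matrix.transpose_transpose, Matrix.transpose_transpose]
        exact Matrix.trace_mul_cycle Uᵀ G M
      rw [hMt, Matrix.trace_add, Matrix.trace_smul, hc, smul_eq_mul]
      ring
    rw [htr]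
    exact heval2 M
  have hGV : G * V = -(l • U) := by rw [← add_eq_zero_iff_eq_neg']; rw [add_comm]; exact hU
  have hGU : Gᵀ * U = -(l • V) := by rw [← add_eq_zero_iff_eq_neg']; rw [add_comm]; exact hV
  -- balancedness
  have hbal : Uᵀ * U = Vᵀ * V := by
    have h1 : Uᵀ * (G * V) = -(l • (Uᵀ * U)) := by
      rw [hGV, Matrix.mul_neg, Matrix.mul_smul]
    have h2 : Uᵀ * (G * V) = -(l • (Vᵀ * V)) := by
      have hUtG : Uᵀ * G = -(l • Vᵀ) := by
        have := congrArg Matrix.transpose hGU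
        rwa [Matrix.transpose_mul, Matrix.transpose_transpose, Matrix.transpose_neg,
          Matrix.transpose_smul] at this
      rw [← Matrix.mul_assoc, hUtG, Matrix.neg_mul, Matrix.smul_mul]
    have h3 : l • (Uᵀ * U) = l • (Vᵀ * V) := by
      have := h1.symm.trans h2
      exact neg_injective this
    exact smul_right_injective _ (ne_of_gt hl) h3
  -- trace identity at the critical point
  have htrX : (Gᵀ * (U * Vᵀ)).trace = -(l * (V * Vᵀ).trace) := by
    rw [← Matrix.mul_assoc, hGU, Matrix.neg_mul, Matrix.smul_mul, Matrix.trace_neg,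
      Matrix.trace_smul, smul_eq_mul]
  have hNX : nuclearNorm (U * Vᵀ) = (V * Vᵀ).trace := Helper.nuclear_eq_of_balanced U V hbal
  have hK1 : -(l * nuclearNorm Y) ≤ (Gᵀ * Y).trace := Helper.trace_ge hl.le G Y hspec
  have hcvx := Helper.convex_first_order hconv hf (U * Vᵀ) Y
  have hgradXY : fderiv ℝ f (U * Vᵀ) (Y - U * Vᵀ)
      = (Gᵀ * Y).trace - (Gᵀ * (U * Vᵀ)).trace := by
    rw [hgrad, Matrix.mul_sub, Matrix.trace_sub]
  replace hcvx : f (U * Vᵀ) + ((Gᵀ * Y).trace - (Gᵀ * (U * Vᵀ)).trace) ≤ f Y := by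
    rw [← hgradXY]; exact hcvx
  have hlNX : l * nuclearNorm (U * Vᵀ) = l * (V * Vᵀ).trace := by rw [hNX]
  linarith
end
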